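/- Let I be an ideal of a Noetherian commutative ring R. Then I is strongly annihilated if and only if I is countable strongly annihilated. -/
import Mathlib


/-- An ideal `I` is strongly annihilated if for each finite subset `F ⊆ I`
and each `b ∉ I` there exists `c` with `c * a = 0` for all `a ∈ F` but `c * b ≠ 0`. -/
def StronglyAnnihilated {R : Type*} [CommRing R] (I : Ideal R) : Prop :=
  ∀ F : Finset R, ↑F ⊆ (I : Set R) → ∀ b ∉ I, ∃ c : R, (∀ a ∈ F, c * a = 0) ∧ c * b ≠ 0

/-- An ideal `I` is countable strongly annihilated if for each countable subset `S ⊆ I`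
and each `b ∉ I` there exists `c` with `c * a = 0` for all `a ∈ S` but `c * b ≠ 0`. -/
def CountableStronglyAnnihilated {R : Type*} [CommRing R] (I : Ideal R) : Prop :=
  ∀ S : Set R, S.Countable → S ⊆ I → ∀ b ∉ I, ∃ c : R, (∀ a ∈ S, c * a = 0) ∧ c * b ≠ 0

/-- In a Noetherian ring, an ideal is strongly annihilated iff it is countable
strongly annihilated. -/
theorem stmt12 {R : Type*} [CommRing R] [IsNoetherianRing R] (I : Ideal R) :
    StronglyAnnihilated I ↔ CountableStronglyAnnihilated I := by
  constructor
  · intro h S hScount hSI b hb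
    -- span S is finitely generated
    have hfg : (Ideal.span S).FG := IsNoetherian.noetherian _
    obtain ⟨G, hG⟩ := hfg
    -- each generator lies in the span of a finite subset of S
    have key : ∀ x : R, x ∈ (G : Set R) → ∃ t : Finset R, ↑t ⊆ S ∧ x ∈ Ideal.span (t : Set R) := by
      intro x hx
      have : x ∈ Ideal.span S := by
        rw [← hG]; exact Ideal.subset_span hx
      exact Submodule.mem_span_finite_of_mem_span this
    choose t ht hxt using key
    -- take the union of these finite subsets
    classical
    let F : Finset R := G.attach.biUnion fun x => t x.1 x.2
    have hFS : (F : Set R) ⊆ S := by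
      intro a ha
      simp only [F, Finset.coe_biUnion, Set.mem_iUnion, Finset.mem_coe] at ha
      obtain ⟨x, _, hax⟩ := ha
      exact ht x.1 x.2 hax
    have hFI : (F : Set R) ⊆ (I : Set R) := fun a ha => hSI (hFS ha)
    obtain ⟨c, hc, hcb⟩ := h F hFI b hb
    refine ⟨c, ?_, hcb⟩
    -- c annihilates span F, and S ⊆ span S = span G ≤ span F
    have hspan : Ideal.span S ≤ Ideal.span (F : Set R) := by
      rw [← hG, Ideal.span_le]
      intro x hx
      have hsub : Ideal.span ((t x hx : Finset R) : Set R) ≤ Ideal.span (F : Set R) := by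
        apply Ideal.span_mono
        intro a ha
        simp only [F, Finset.coe_biUnion, Set.mem_iUnion, Finset.mem_coe]
        exact ⟨⟨x, hx⟩, Finset.mem_attach _ _, ha⟩
      exact hsub (hxt x hx)
    intro a haS
    have haF : a ∈ Ideal.span (F : Set R) := hspan (Ideal.subset_span haS)
    -- the annihilator of c contains F, hence its span
    have : Ideal.span (F : Set R) ≤ LinearMap.ker (LinearMap.mul R R c) := by
      rw [Ideal.span_le]
      intro y hy
      simpa using hc y hy
    simpa using this haF
  · intro h F hFI b hb
    obtain ⟨c, hc, hcb⟩ := h (F : Set R) (F.countable_toSet) hFI b hb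
    exact ⟨c, fun a ha => hc a ha, hcb⟩
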